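/- Let k ≥ 2 be an integer, let Ω be a finite set, let a : ℕ₀ → Ω be a k-automatic sequence, and let ρ : Ω → ℝ. Then the following are equivalent: (i) for every y ∈ Ω, the set {n ∈ ℕ₀ : a(n) = y} has natural density ρ(y); (ii) for every y ∈ Ω, the set {n ∈ ℕ₀ : a(n) = y} has uniform density ρ(y), i.e., |{n ∈ [M, M+N) : a(n) = y}| / N → ρ(y) as N → ∞, uniformly in M ∈ ℕ₀. -/

import Mathlib

open Filter Topology

/-- The `k`-kernel of a sequence: all subsequences `n ↦ f (k^l * n + r)` with `0 ≤ r < k^l`. -/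
def kKernel {Ω : Type*} (k : ℕ) (f : ℕ → Ω) : Set (ℕ → Ω) :=
  {g | ∃ l r : ℕ, r < k ^ l ∧ g = fun n => f (k ^ l * n + r)}

/-- A sequence is `k`-automatic if its `k`-kernel is finite. -/
def IsKAutomatic {Ω : Type*} (k : ℕ) (f : ℕ → Ω) : Prop :=
  (kKernel k f).Finite

/-- A sequence `f` is weakly periodic if every restriction `n ↦ f (a n + b)` (with `a ≥ 1`)
agrees along two distinct residues `r ≠ r'` modulo some `q ≥ 1`. -/
def WeaklyPeriodic {Ω : Type*} (f : ℕ → Ω) : Prop :=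
  ∀ a b : ℕ, 0 < a → ∃ q r r' : ℕ, 0 < q ∧ r ≠ r' ∧
    ∀ n : ℕ, f (a * (q * n + r) + b) = f (a * (q * n + r') + b)

/-- A sequence is periodic (with some period `q ≥ 1`). -/
def PeriodicSeq {Ω : Type*} (f : ℕ → Ω) : Prop :=
  ∃ q : ℕ, 0 < q ∧ ∀ n : ℕ, f (n + q) = f n

open Finset

noncomputable def cnt {Ω : Type*} (a : ℕ → Ω) (y : Ω) (s t : ℕ) : ℕ :=
  (@Finset.filter _ (fun n => a n = y) (Classical.decPred _) (Finset.Ico s t)).card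

lemma cnt_bridge {Ω : Type*} (a : ℕ → Ω) (y : Ω) (s t : ℕ) :
    ({n : ℕ | a n = y} ∩ Set.Ico s t).ncard = cnt a y s t := by
  classical
  rw [cnt]
  rw [show ({n : ℕ | a n = y} ∩ Set.Ico s t)
      = ↑(@Finset.filter _ (fun n => a n = y) (Classical.decPred _) (Finset.Ico s t)) by
    ext n; simp [Set.mem_Ico, and_comm]]
  exact Set.ncard_coe_finset _

lemma cnt_bridge' {Ω : Type*} (a : ℕ → Ω) (y : Ω) (t : ℕ) :
    ({n : ℕ | a n = y} ∩ Set.Iio t).ncard = cnt a y 0 t := by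
  rw [← cnt_bridge]
  congr 1
  ext n; simp

lemma cnt_le {Ω : Type*} (a : ℕ → Ω) (y : Ω) (s t : ℕ) : cnt a y s t ≤ t - s := by
  classical
  calc cnt a y s t ≤ (Finset.Ico s t).card := Finset.card_filter_le _ _
  _ = t - s := Nat.card_Ico s t

lemma cnt_add {Ω : Type*} (a : ℕ → Ω) (y : Ω) {s t u : ℕ} (h1 : s ≤ t) (h2 : t ≤ u) :
    cnt a y s u = cnt a y s t + cnt a y t u := by
  classical
  rw [cnt, cnt, cnt, ← Finset.card_union_of_disjoint, ← Finset.filter_union,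
    Finset.Ico_union_Ico_eq_Ico h1 h2]
  exact Finset.disjoint_filter_filter (Finset.Ico_disjoint_Ico_consecutive s t u)

lemma cnt_eq_range {Ω : Type*} (a : ℕ → Ω) (y : Ω) (b L : ℕ) :
    cnt a y b (b + L)
      = (@Finset.filter _ (fun r => a (b + r) = y) (Classical.decPred _) (Finset.range L)).card := by
  classical
  rw [cnt]
  rw [show Finset.Ico b (b + L) = (Finset.range L).map (addLeftEmbedding b) by
    ext n
    simp only [Finset.mem_Ico, Finset.mem_map, Finset.mem_range, addLeftEmbedding_apply]
    constructor
    · intro h; exact ⟨n - b, by omega, by omega⟩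
    · rintro ⟨r, hr, rfl⟩; omega]
  rw [Finset.filter_map, Finset.card_map]
  rfl

section Main

variable {Ω : Type*} (k : ℕ) (a : ℕ → Ω) (y : Ω) (ρ : ℝ)

lemma cnt_empty : cnt a y 0 0 = 0 := by simp [cnt]

lemma hpow_tendsto (hk : 2 ≤ k) : Tendsto (fun l : ℕ => k ^ l) atTop atTop := by
  apply StrictMono.tendsto_atTop
  exact fun i j hij => Nat.pow_lt_pow_right (by omega) hij

lemma hterm (hk : 2 ≤ k)
    (hnat : Tendsto (fun N : ℕ => (cnt a y 0 N : ℝ) / N) atTop (nhds ρ)) (c : ℕ) :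
    Tendsto (fun l : ℕ => (c : ℝ) * ((cnt a y 0 (c * k ^ l) : ℝ) / ((c * k ^ l : ℕ) : ℝ))) atTop
      (nhds ((c : ℝ) * ρ)) := by
  rcases Nat.eq_zero_or_pos c with rfl | hc
  · simpa using tendsto_const_nhds
  · apply Tendsto.const_mul
    apply hnat.comp
    apply tendsto_atTop_mono (fun l => Nat.le_mul_of_pos_left (k ^ l) hc)
    exact hpow_tendsto k hk

lemma block_div (hk : 2 ≤ k) (c l : ℕ) :
    ((cnt a y 0 (c * k ^ l) : ℝ)) / (k ^ l : ℕ) =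
      (c : ℝ) * ((cnt a y 0 (c * k ^ l) : ℝ) / ((c * k ^ l : ℕ) : ℝ)) := by
  rcases Nat.eq_zero_or_pos c with rfl | hc
  · simp [cnt_empty]
  · have h1 : ((k : ℝ) ^ l) ≠ 0 := by positivity
    have h2 : (c : ℝ) ≠ 0 := by exact_mod_cast hc.ne'
    push_cast
    field_simp

lemma tends_fixed (hk : 2 ≤ k)
    (hnat : Tendsto (fun N : ℕ => (cnt a y 0 N : ℝ) / N) atTop (nhds ρ)) (m : ℕ) :
    Tendsto (fun l : ℕ => (cnt a y (k ^ l * m) (k ^ l * m + k ^ l) : ℝ) / (k ^ l : ℕ))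
      atTop (nhds ρ) := by
  have hsplit : ∀ l : ℕ, (cnt a y (k ^ l * m) (k ^ l * m + k ^ l) : ℝ)
      = (cnt a y 0 ((m + 1) * k ^ l) : ℝ) - (cnt a y 0 (m * k ^ l) : ℝ) := by
    intro l
    have e2 : m * k ^ l + k ^ l = (m + 1) * k ^ l := by ring
    have h := cnt_add a y (Nat.zero_le (m * k ^ l))
      (le_add_of_nonneg_right (Nat.zero_le (k ^ l)))
    rw [Nat.mul_comm (k ^ l) m, ← e2, h]
    push_cast
    ring
  have key : Tendsto (fun l : ℕ =>
      ((cnt a y 0 ((m + 1) * k ^ l) : ℝ)) / (k ^ l : ℕ)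
        - ((cnt a y 0 (m * k ^ l) : ℝ)) / (k ^ l : ℕ)) atTop (nhds ρ) := by
    have h1 := (hterm k a y ρ hk hnat (m + 1))
    have h2 := (hterm k a y ρ hk hnat m)
    have := h1.sub h2
    have hval : ((m : ℝ) + 1) * ρ - (m : ℝ) * ρ = ρ := by ring
    simp only [Nat.cast_add, Nat.cast_one] at this
    rw [hval] at this
    apply this.congr
    intro l
    rw [block_div k a y hk (m+1) l, block_div k a y hk m l]
    push_cast
    ring
  apply key.congr
  intro l
  rw [hsplit l]
  ring


lemma bc_congr (l m m' : ℕ)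
    (h : ∀ g : ℕ → Ω, g ∈ kKernel k a → (g m = y ↔ g m' = y)) :
    cnt a y (k ^ l * m) (k ^ l * m + k ^ l) = cnt a y (k ^ l * m') (k ^ l * m' + k ^ l) := by
  classical
  rw [cnt_eq_range, cnt_eq_range]
  congr 1
  apply Finset.filter_congr
  intro r hr
  rw [Finset.mem_range] at hr
  have hg : (fun n => a (k ^ l * n + r)) ∈ kKernel k a := ⟨l, r, hr, rfl⟩
  simpa using h _ hg

lemma step1 [Finite Ω] (hk : 2 ≤ k) (ha : IsKAutomatic k a)
    (hnat : Tendsto (fun N : ℕ => (cnt a y 0 N : ℝ) / N) atTop (nhds ρ))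
    {ε : ℝ} (hε : 0 < ε) :
    ∃ l₀ : ℕ, ∀ l, l₀ ≤ l → ∀ m : ℕ,
      |(cnt a y (k ^ l * m) (k ^ l * m + k ^ l) : ℝ) / (k ^ l : ℕ) - ρ| < ε := by
  classical
  haveI : Finite (kKernel k a) := ha.to_subtype
  set Φ : ℕ → Set (kKernel k a) := fun m => {g | g.1 m = y} with hΦ
  haveI : Finite (Set (kKernel k a)) := by infer_instance
  have hfin : (Set.range Φ).Finite := Set.toFinite _
  set rep : Set (kKernel k a) → ℕ := fun v => if h : v ∈ Set.range Φ then h.choose else 0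
    with hrep
  have hrepΦ : ∀ v ∈ Set.range Φ, Φ (rep v) = v := by
    intro v hv
    simp only [hrep, dif_pos hv]
    exact hv.choose_spec
  have hev : ∀ᶠ l in atTop, ∀ v ∈ Set.range Φ,
      |(cnt a y (k ^ l * rep v) (k ^ l * rep v + k ^ l) : ℝ) / (k ^ l : ℕ) - ρ| < ε := by
    rw [Filter.eventually_all_finite hfin]
    intro v hv
    have := tends_fixed k a y ρ hk hnat (rep v)
    have := Metric.tendsto_atTop.mp this ε hε
    obtain ⟨l₀, hl₀⟩ := this
    filter_upwards [Filter.eventually_ge_atTop l₀] with l hl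
    have := hl₀ l hl
    rwa [Real.dist_eq] at this
  obtain ⟨l₀, hl₀⟩ := Filter.eventually_atTop.mp hev
  refine ⟨l₀, fun l hl m => ?_⟩
  have hvm : Φ m ∈ Set.range Φ := ⟨m, rfl⟩
  have heq : cnt a y (k ^ l * m) (k ^ l * m + k ^ l)
      = cnt a y (k ^ l * rep (Φ m)) (k ^ l * rep (Φ m) + k ^ l) := by
    apply bc_congr
    intro g hg
    have h := hrepΦ _ hvm
    have : (⟨g, hg⟩ : kKernel k a) ∈ Φ (rep (Φ m)) ↔ (⟨g, hg⟩ : kKernel k a) ∈ Φ m := by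
      rw [h]
    simpa [hΦ] using this.symm
  rw [heq]
  exact hl₀ l hl _ hvm

lemma cnt_sum (L : ℕ) : ∀ p q : ℕ, p ≤ q →
    cnt a y (L * p) (L * q) = ∑ m ∈ Finset.Ico p q, cnt a y (L * m) (L * m + L) := by
  intro p q
  refine Nat.le_induction ?_ ?_ q
  · simp [cnt]
  · intro q hpq ih
    have h1 : L * p ≤ L * q := Nat.mul_le_mul_left L hpq
    have h2 : L * q ≤ L * q + L := Nat.le_add_right _ _
    have e : L * (q + 1) = L * q + L := by ring
    rw [e, cnt_add a y h1 h2, ih, Finset.sum_Ico_succ_top hpq]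

end Main

set_option maxHeartbeats 1000000 in
/-- For a `k`-automatic sequence `a : ℕ → Ω` (`Ω` finite) and
`ρ : Ω → ℝ`, each fibre `{n : a n = y}` has natural density `ρ y` iff each fibre has
uniform density `ρ y`. -/
theorem stmt_14 {Ω : Type*} [Finite Ω] (k : ℕ) (hk : 2 ≤ k) (a : ℕ → Ω)
    (ha : IsKAutomatic k a) (ρ : Ω → ℝ) :
    (∀ y : Ω, Filter.Tendsto
        (fun N : ℕ => (({n : ℕ | a n = y} ∩ Set.Iio N).ncard : ℝ) / N)
        Filter.atTop (nhds (ρ y))) ↔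
    (∀ y : Ω, ∀ ε : ℝ, 0 < ε → ∃ N₀ : ℕ, ∀ N : ℕ, N₀ ≤ N → ∀ M : ℕ,
        |(({n : ℕ | a n = y} ∩ Set.Ico M (M + N)).ncard : ℝ) / N - ρ y| < ε) := by
  constructor
  · intro h y ε hε
    have hnat : Tendsto (fun N : ℕ => (cnt a y 0 N : ℝ) / N) atTop (nhds (ρ y)) := by
      apply (h y).congr
      intro N
      rw [cnt_bridge']
    have hε4 : (0:ℝ) < ε / 4 := by linarith
    obtain ⟨l₀, hl₀⟩ := step1 k a y (ρ y) hk ha hnat hε4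
    set L := k ^ l₀ with hLdef
    have hL0 : 0 < L := Nat.pow_pos (by omega : 0 < k)
    have hL0' : (0:ℝ) < (L : ℝ) := by exact_mod_cast hL0
    have hblock : ∀ m : ℕ, |(cnt a y (L * m) (L * m + L) : ℝ) / (L : ℝ) - ρ y| < ε / 4 :=
      fun m => hl₀ l₀ le_rfl m
    have habs : ∀ m : ℕ, |(cnt a y (L * m) (L * m + L) : ℝ) - ρ y * L| ≤ ε / 4 * L := by
      intro m
      have h1 := hblock m
      have e : (cnt a y (L * m) (L * m + L) : ℝ) - ρ y * L
          = ((cnt a y (L * m) (L * m + L) : ℝ) / L - ρ y) * L := by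
        field_simp
      rw [e, abs_mul, abs_of_pos hL0']
      nlinarith [abs_nonneg ((cnt a y (L * m) (L * m + L) : ℝ) / L - ρ y)]
    obtain ⟨N₁, hN₁⟩ := exists_nat_gt ((2 * (L:ℝ) * (1 + |ρ y|)) / (ε / 2))
    refine ⟨max (2 * L) (N₁ + 1), fun N hN M => ?_⟩
    have hN2L : 2 * L ≤ N := le_trans (le_max_left _ _) hN
    have hNN1 : N₁ + 1 ≤ N := le_trans (le_max_right _ _) hN
    have hN0 : 0 < N := by omega
    have hN0' : (0:ℝ) < (N : ℝ) := by exact_mod_cast hN0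
    set p := M / L + 1 with hpdef
    set q := (M + N) / L with hqdef
    have hA := Nat.div_add_mod M L
    have hB := Nat.mod_lt M hL0
    have hA2 : L * q + (M + N) % L = M + N := by
      rw [hqdef]; exact Nat.div_add_mod (M + N) L
    have hB2 := Nat.mod_lt (M + N) hL0
    have ep : L * p = L * (M / L) + L := Nat.mul_succ L (M / L)
    have hp1 : M < L * p := by omega
    have hp2 : L * p ≤ M + L := by omega
    have hq1 : L * q ≤ M + N := by omega
    have hq2 : M + N < L * q + L := by omega
    have hLpq : L * p < L * q := by omega
    have hpq : p < q := lt_of_mul_lt_mul_left hLpq (Nat.zero_le L)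
    set d := q - p with hddef
    have hqpd : q = p + d := by omega
    have eLd : L * q = L * p + L * d := by rw [hqpd]; ring
    have hdL1 : L * d ≤ N := by omega
    have hdL2 : N ≤ L * d + 2 * L := by omega
    have hsplit1 : cnt a y M (M + N)
        = cnt a y M (L * p) + cnt a y (L * p) (L * q) + cnt a y (L * q) (M + N) := by
      rw [cnt_add a y (le_trans hp1.le hLpq.le) hq1, cnt_add a y hp1.le hLpq.le]
    have hsum := cnt_sum a y L p q hpq.le
    have hb1 : cnt a y M (L * p) ≤ L := le_trans (cnt_le a y M (L * p)) (by omega)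
    have hb2 : cnt a y (L * q) (M + N) ≤ L := le_trans (cnt_le a y (L * q) (M + N)) (by omega)
    have hsumb : |(cnt a y (L * p) (L * q) : ℝ) - ρ y * ((L : ℝ) * (d : ℝ))|
        ≤ ε / 4 * ((L : ℝ) * (d : ℝ)) := by
      have ecast : (cnt a y (L * p) (L * q) : ℝ)
          = ∑ m ∈ Finset.Ico p q, (cnt a y (L * m) (L * m + L) : ℝ) := by
        rw [hsum, Nat.cast_sum]
      have hcd : ((Finset.Ico p q).card : ℕ) = d := by rw [Nat.card_Ico, hddef]
      have econst : ρ y * ((L : ℝ) * (d : ℝ))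
          = ∑ _m ∈ Finset.Ico p q, ρ y * (L : ℝ) := by
        rw [Finset.sum_const, hcd, nsmul_eq_mul]
        ring
      rw [ecast, econst, ← Finset.sum_sub_distrib]
      calc |∑ m ∈ Finset.Ico p q, ((cnt a y (L * m) (L * m + L) : ℝ) - ρ y * (L : ℝ))|
          ≤ ∑ m ∈ Finset.Ico p q, |(cnt a y (L * m) (L * m + L) : ℝ) - ρ y * (L : ℝ)| :=
            Finset.abs_sum_le_sum_abs _ _
        _ ≤ ∑ _m ∈ Finset.Ico p q, ε / 4 * (L : ℝ) :=
            Finset.sum_le_sum (fun m _ => habs m)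
        _ = ε / 4 * ((L : ℝ) * (d : ℝ)) := by
            rw [Finset.sum_const, hcd, nsmul_eq_mul]
            ring
    have hTc : (cnt a y M (M + N) : ℝ)
        = (cnt a y M (L * p) : ℝ) + (cnt a y (L * p) (L * q) : ℝ)
          + (cnt a y (L * q) (M + N) : ℝ) := by exact_mod_cast congrArg Nat.cast hsplit1
    have hC : 2 * (L:ℝ) * (1 + |ρ y|) < ε / 2 * (N : ℝ) := by
      have hN₁' : ((N₁ : ℝ)) < (N : ℝ) := by exact_mod_cast (by omega : N₁ < N)
      have := hN₁.trans hN₁'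
      rw [div_lt_iff₀ (by linarith : (0:ℝ) < ε / 2)] at this
      linarith
    have hcore : |(cnt a y M (M + N) : ℝ) - ρ y * (N : ℝ)| < ε * (N : ℝ) := by
      have e : (cnt a y M (M + N) : ℝ) - ρ y * (N : ℝ)
          = ((cnt a y M (L * p) : ℝ) + (cnt a y (L * q) (M + N) : ℝ))
            + ((cnt a y (L * p) (L * q) : ℝ) - ρ y * ((L : ℝ) * (d : ℝ)))
            + ρ y * ((L : ℝ) * (d : ℝ) - (N : ℝ)) := by
        rw [hTc]; ring
      have hthree := abs_add_three
        ((cnt a y M (L * p) : ℝ) + (cnt a y (L * q) (M + N) : ℝ))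
        ((cnt a y (L * p) (L * q) : ℝ) - ρ y * ((L : ℝ) * (d : ℝ)))
        (ρ y * ((L : ℝ) * (d : ℝ) - (N : ℝ)))
      rw [e]
      have h1 : |(cnt a y M (L * p) : ℝ) + (cnt a y (L * q) (M + N) : ℝ)| ≤ 2 * (L : ℝ) := by
        rw [abs_of_nonneg (by positivity)]
        have c1 : (cnt a y M (L * p) : ℝ) ≤ (L : ℝ) := by exact_mod_cast hb1
        have c2 : (cnt a y (L * q) (M + N) : ℝ) ≤ (L : ℝ) := by exact_mod_cast hb2
        linarith
      have h3 : |ρ y * ((L : ℝ) * (d : ℝ) - (N : ℝ))| ≤ |ρ y| * (2 * (L : ℝ)) := by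
        rw [abs_mul]
        apply mul_le_mul_of_nonneg_left _ (abs_nonneg _)
        rw [abs_le]
        have c1 : (L : ℝ) * (d : ℝ) ≤ (N : ℝ) := by exact_mod_cast hdL1
        have c2 : (N : ℝ) ≤ (L : ℝ) * (d : ℝ) + 2 * (L : ℝ) := by exact_mod_cast hdL2
        constructor <;> linarith
      have h2' : ε / 4 * ((L : ℝ) * (d : ℝ)) ≤ ε / 4 * (N : ℝ) := by
        apply mul_le_mul_of_nonneg_left _ (by linarith)
        exact_mod_cast hdL1
      apply lt_of_le_of_lt hthree
      nlinarith [abs_nonneg (ρ y)]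
    have egoal : ({n : ℕ | a n = y} ∩ Set.Ico M (M + N)).ncard = cnt a y M (M + N) :=
      cnt_bridge a y M (M + N)
    rw [egoal]
    have e2 : (cnt a y M (M + N) : ℝ) / (N : ℝ) - ρ y
        = ((cnt a y M (M + N) : ℝ) - ρ y * (N : ℝ)) / (N : ℝ) := by
      field_simp
    rw [e2, abs_div, abs_of_pos hN0', div_lt_iff₀ hN0']
    exact hcore
  · intro h y
    rw [Metric.tendsto_atTop]
    intro ε hε
    obtain ⟨N₀, hN₀⟩ := h y ε hε
    refine ⟨N₀, fun N hN => ?_⟩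
    have := hN₀ N hN 0
    rw [Real.dist_eq]
    have e : {n : ℕ | a n = y} ∩ Set.Ico 0 (0 + N) = {n : ℕ | a n = y} ∩ Set.Iio N := by
      ext n; simp
    rwa [e] at this
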